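/- Assume char F ≠ 2, 3 and let S = {(a_1,a_2,a_3) ∈ F^3 : a_1+a_2+a_3 = 0} ⊆ W = F^3. The Lie subalgebra S^σ[G] = span{r g : r ∈ S, g ∈ G} of W^σ[G] decomposes as the direct sum of Sg_0 = {r g_0 : r ∈ S}, which is the center of S^σ[G] and has dimension 2, and S^σ[G^×] = span{r g_i : r ∈ S, i ∈ I}, which is a simple Lie subalgebra of dimension 14 (of type G_2). -/

import Mathlib

namespace GGA

noncomputable section

variable (F : Type*) [Field F]

/-- The labelling `g_0, …, g_7` of the eight elements of `G = (ℤ/2ℤ)³`: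
`g_0=(0,0,0), g_1=(1,0,0), g_2=(0,1,0), g_3=(0,0,1), g_4=(1,1,0), g_5=(0,1,1),
g_6=(1,1,1), g_7=(1,0,1)`. -/
def lab : Fin 8 → Fin 3 → ZMod 2 :=
  ![![0, 0, 0], ![1, 0, 0], ![0, 1, 0], ![0, 0, 1],
    ![1, 1, 0], ![0, 1, 1], ![1, 1, 1], ![1, 0, 1]]

/-- `star i j` is the unique index `k ∈ {0,…,7}` with `g_i + g_j = g_k`. -/
def star (i j : Fin 8) : Fin 8 := Function.invFun lab (lab i + lab j)

/-- The formula for `σ_{i,i+1}(r,s)` on `W = F³`. -/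
def w1 (r s : Fin 3 → F) : Fin 3 → F :=
  ![-(r 1 * s 0) - r 2 * s 2, -(r 1 * s 2) - r 2 * s 0, r 0 * s 1]

/-- The formula for `σ_{i,i+2}(r,s)` on `W = F³`. -/
def w2 (r s : Fin 3 → F) : Fin 3 → F :=
  ![r 1 * s 2, -(r 0 * s 0) - r 2 * s 1, -(r 0 * s 1) - r 2 * s 0]

/-- The formula for `σ_{i,i+4}(r,s)` on `W = F³`. -/
def w4 (r s : Fin 3 → F) : Fin 3 → F :=
  ![-(r 0 * s 1) - r 1 * s 2, r 2 * s 0, -(r 0 * s 2) - r 1 * s 1]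

/-- The twist `σ : G × G → Bil(W × W, W)`, `W = F³`. -/
def sigma3 (i j : Fin 8) (r s : Fin 3 → F) : Fin 3 → F :=
  if i = 0 ∨ j = 0 ∨ i = j then 0
  else if ((j : ℕ) + 7 - (i : ℕ)) % 7 = 1 then w1 F r s
  else if ((j : ℕ) + 7 - (i : ℕ)) % 7 = 2 then w2 F r s
  else if ((j : ℕ) + 7 - (i : ℕ)) % 7 = 3 then -w4 F s r
  else if ((j : ℕ) + 7 - (i : ℕ)) % 7 = 4 then w4 F r s
  else if ((j : ℕ) + 7 - (i : ℕ)) % 7 = 5 then -w2 F s r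
  else -w1 F s r

/-- `single3 i r` is the formal sum `r gᵢ` in `W^σ[G]`, viewed as a function `G → W`. -/
def single3 (i : Fin 8) (r : Fin 3 → F) : Fin 8 → Fin 3 → F :=
  fun k => if k = i then r else 0

/-- The product of `W^σ[G]`: the unique bilinear extension of
`[r gᵢ, s gⱼ] = σ_{i,j}(r,s) g_{i*j}`. -/
def bracket3 (x y : Fin 8 → Fin 3 → F) : Fin 8 → Fin 3 → F :=
  fun k => ∑ i : Fin 8, ∑ j : Fin 8, if star i j = k then sigma3 F i j (x i) (y j) else 0

/-- The subspace `S = {(a₁,a₂,a₃) : a₁ + a₂ + a₃ = 0}` of `W = F³`. -/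
def Sset : Set (Fin 3 → F) := {r | r 0 + r 1 + r 2 = 0}

/-- The Lie subalgebra `S^σ[G] = span{r g : r ∈ S, g ∈ G}` of `W^σ[G]`. -/
def SG : Submodule F (Fin 8 → Fin 3 → F) :=
  Submodule.span F {z : Fin 8 → Fin 3 → F | ∃ i : Fin 8, ∃ r ∈ Sset F, z = single3 F i r}

/-- `Sg₀ = {r g₀ : r ∈ S}`. -/
def SG0 : Submodule F (Fin 8 → Fin 3 → F) :=
  Submodule.span F {z : Fin 8 → Fin 3 → F | ∃ r ∈ Sset F, z = single3 F 0 r}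

/-- `S^σ[G^×] = span{r gᵢ : r ∈ S, i ∈ I}`. -/
def SGx : Submodule F (Fin 8 → Fin 3 → F) :=
  Submodule.span F
    {z : Fin 8 → Fin 3 → F | ∃ i : Fin 8, i ≠ 0 ∧ ∃ r ∈ Sset F, z = single3 F i r}

end
end GGA

-- test star lemmas
namespace GGA
noncomputable section
variable (F : Type*) [Field F]

/-- Explicit table for `star`. -/
def star' : Fin 8 → Fin 8 → Fin 8 :=
  ![![0,1,2,3,4,5,6,7],
    ![1,0,4,7,2,6,5,3],
    ![2,4,0,5,1,3,7,6],
    ![3,7,5,0,6,2,4,1],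
    ![4,2,1,6,0,7,3,5],
    ![5,6,3,2,7,0,1,4],
    ![6,5,7,4,3,1,0,2],
    ![7,3,6,1,5,4,2,0]]

lemma lab_inj : ∀ a b : Fin 8, lab a = lab b → a = b := by decide

lemma lab_add : ∀ i j : Fin 8, lab i + lab j = lab (star' i j) := by decide

lemma star_eq : star = star' := by
  funext i j
  have h1 : ∃ a, lab a = lab i + lab j := ⟨star' i j, (lab_add i j).symm⟩
  have h2 : lab (star i j) = lab i + lab j := Function.invFun_eq h1
  exact lab_inj _ _ (h2.trans (lab_add i j))

lemma star_star : ∀ k c : Fin 8, star k (star k c) = c := by rw [star_eq]; decide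

lemma star_self : ∀ k : Fin 8, star k k = 0 := by rw [star_eq]; decide

lemma star_zero : ∀ k : Fin 8, star k 0 = k := by rw [star_eq]; decide

lemma star_eq_zero : ∀ i j : Fin 8, star i j = 0 ↔ i = j := by rw [star_eq]; decide

end
end GGA
namespace GGA
noncomputable section
variable (F : Type*) [Field F]

/-- basis vectors of S -/
def ve : Fin 3 → F := ![1, -1, 0]
def vf : Fin 3 → F := ![0, 1, -1]

lemma sig_zero_left (i j : Fin 8) (s : Fin 3 → F) : sigma3 F i j 0 s = 0 := by
  unfold sigma3 w1 w2 w4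
  split_ifs <;> funext m <;> fin_cases m <;> simp

lemma sig_zero_right (i j : Fin 8) (r : Fin 3 → F) : sigma3 F i j r 0 = 0 := by
  unfold sigma3 w1 w2 w4
  split_ifs <;> funext m <;> fin_cases m <;> simp

lemma sig_diag (i : Fin 8) (r s : Fin 3 → F) : sigma3 F i i r s = 0 := by
  unfold sigma3; simp

lemma sig_left0 (j : Fin 8) (r s : Fin 3 → F) : sigma3 F 0 j r s = 0 := by
  unfold sigma3; simp

lemma sig_right0 (i : Fin 8) (r s : Fin 3 → F) : sigma3 F i 0 r s = 0 := by
  unfold sigma3; simp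

lemma single3_zero (i : Fin 8) : single3 F i 0 = 0 := by
  funext k; unfold single3; split_ifs <;> rfl

/-- bracket of singles -/
lemma bracket_single (i j : Fin 8) (r s : Fin 3 → F) :
    bracket3 F (single3 F i r) (single3 F j s) = single3 F (star i j) (sigma3 F i j r s) := by
  funext k
  unfold bracket3
  rw [Finset.sum_eq_single i]
  · rw [Finset.sum_eq_single j]
    · simp only [single3, if_pos rfl]
      by_cases h : star i j = k
      · rw [if_pos h, if_pos h.symm]; simp
      · rw [if_neg h, if_neg (fun hk => h hk.symm)]
    · intro b _ hb
      simp only [single3, if_neg hb, sig_zero_right, ite_self]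
    · intro h; exact absurd (Finset.mem_univ j) h
  · intro a _ ha
    apply Finset.sum_eq_zero
    intro b _
    simp only [single3, if_neg ha, sig_zero_left, ite_self]
  · intro h; exact absurd (Finset.mem_univ i) h

lemma bracket_single_left (k : Fin 8) (s : Fin 3 → F) (z : Fin 8 → Fin 3 → F) (c : Fin 8) :
    bracket3 F (single3 F k s) z c = sigma3 F k (star k c) s (z (star k c)) := by
  unfold bracket3
  rw [Finset.sum_eq_single k]
  · rw [Finset.sum_eq_single (star k c)]
    · rw [if_pos (star_star k c)]
      simp [single3]
    · intro b _ hb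
      rw [if_neg]
      intro h
      exact hb (by rw [← h, star_star])
    · intro h; exact absurd (Finset.mem_univ _) h
  · intro a _ ha
    apply Finset.sum_eq_zero
    intro b _
    simp only [single3, if_neg ha, sig_zero_left, ite_self]
  · intro h; exact absurd (Finset.mem_univ _) h

lemma bracket_single_right (j : Fin 8) (s : Fin 3 → F) (z : Fin 8 → Fin 3 → F) (c : Fin 8) :
    bracket3 F z (single3 F j s) c = sigma3 F (star c j) j (z (star c j)) s := by
  unfold bracket3
  have hcomm : ∀ a b : Fin 8, star a b = star b a := by rw [star_eq]; decide
  rw [Finset.sum_comm]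
  rw [Finset.sum_eq_single j]
  · rw [Finset.sum_eq_single (star c j)]
    · rw [if_pos (by rw [hcomm, hcomm c j, star_star])]
      simp [single3]
    · intro b _ hb
      rw [if_neg]
      intro h
      apply hb
      rw [← h, hcomm b j]
      rw [hcomm (star j b) j, star_star]
    · intro h; exact absurd (Finset.mem_univ _) h
  · intro a _ ha
    apply Finset.sum_eq_zero
    intro b _
    simp only [single3, if_neg ha, sig_zero_right, ite_self]
  · intro h; exact absurd (Finset.mem_univ _) h

end
end GGA
namespace GGA
noncomputable section
variable (F : Type*) [Field F]


lemma mem_Sset_iff (r : Fin 3 → F) : r ∈ Sset F ↔ r 0 + r 1 + r 2 = 0 := Iff.rfl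

lemma sig_br (i j : Fin 8) (hi : i ≠ 0) (hj : j ≠ 0) (hij : i ≠ j) (r s : Fin 3 → F) :
    sigma3 F i j r s =
      if ((j : ℕ) + 7 - (i : ℕ)) % 7 = 1 then w1 F r s
      else if ((j : ℕ) + 7 - (i : ℕ)) % 7 = 2 then w2 F r s
      else if ((j : ℕ) + 7 - (i : ℕ)) % 7 = 3 then -w4 F s r
      else if ((j : ℕ) + 7 - (i : ℕ)) % 7 = 4 then w4 F r s
      else if ((j : ℕ) + 7 - (i : ℕ)) % 7 = 5 then -w2 F s r
      else -w1 F s r := by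
  unfold sigma3
  rw [if_neg]
  push_neg
  exact ⟨hi, hj, hij⟩

lemma w1_sum (r s : Fin 3 → F) (hr : r 0 + r 1 + r 2 = 0) (hs : s 0 + s 1 + s 2 = 0) :
    w1 F r s 0 + w1 F r s 1 + w1 F r s 2 = 0 := by
  unfold w1; simp; linear_combination (-(s 0 + s 2)) * hr + r 0 * hs

lemma w2_sum (r s : Fin 3 → F) (hr : r 0 + r 1 + r 2 = 0) (hs : s 0 + s 1 + s 2 = 0) :
    w2 F r s 0 + w2 F r s 1 + w2 F r s 2 = 0 := by
  unfold w2; simp; linear_combination (-(s 0 + s 1)) * hr + r 1 * hs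

lemma w4_sum (r s : Fin 3 → F) (hr : r 0 + r 1 + r 2 = 0) (hs : s 0 + s 1 + s 2 = 0) :
    w4 F r s 0 + w4 F r s 1 + w4 F r s 2 = 0 := by
  unfold w4; simp; linear_combination (-(s 1 + s 2)) * hr + r 2 * hs

/-- sigma3 of S-elements lies in S -/
lemma sig_mem (i j : Fin 8) (r s : Fin 3 → F) (hr : r 0 + r 1 + r 2 = 0)
    (hs : s 0 + s 1 + s 2 = 0) :
    sigma3 F i j r s 0 + sigma3 F i j r s 1 + sigma3 F i j r s 2 = 0 := by
  unfold sigma3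
  split_ifs
  · simp
  · exact w1_sum F r s hr hs
  · exact w2_sum F r s hr hs
  · simp only [Pi.neg_apply]; linear_combination -(w4_sum F s r hs hr)
  · exact w4_sum F r s hr hs
  · simp only [Pi.neg_apply]; linear_combination -(w2_sum F s r hs hr)
  · simp only [Pi.neg_apply]; linear_combination -(w1_sum F s r hs hr)

/-- membership characterization of SGx -/
def goodx (x : Fin 8 → Fin 3 → F) : Prop :=
  x 0 = 0 ∧ ∀ i, x i 0 + x i 1 + x i 2 = 0

lemma single3_apply (i : Fin 8) (r : Fin 3 → F) (k : Fin 8) :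
    single3 F i r k = if k = i then r else 0 := rfl

lemma single3_mem_SGx (i : Fin 8) (hi : i ≠ 0) (r : Fin 3 → F) (hr : r ∈ Sset F) :
    single3 F i r ∈ SGx F :=
  Submodule.subset_span ⟨i, hi, r, hr, rfl⟩

lemma sum_single (x : Fin 8 → Fin 3 → F) :
    x = ∑ i : Fin 8, single3 F i (x i) := by
  funext k
  rw [Finset.sum_apply]
  simp only [single3_apply]
  rw [Finset.sum_ite_eq (Finset.univ : Finset (Fin 8)) k (fun i => x i)]
  simp

lemma mem_SGx_iff (x : Fin 8 → Fin 3 → F) : x ∈ SGx F ↔ goodx F x := by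
  constructor
  · intro hx
    refine Submodule.span_induction ?_ ?_ ?_ ?_ hx
    · rintro z ⟨i, hi, r, hr, rfl⟩
      constructor
      · rw [single3_apply, if_neg (fun h => hi h.symm)]
      · intro k
        rw [single3_apply]
        split_ifs
        · exact hr
        · simp
    · exact ⟨rfl, by intro i; simp⟩
    · rintro a b _ _ ⟨ha0, has⟩ ⟨hb0, hbs⟩
      refine ⟨by simp [ha0, hb0], fun i => ?_⟩
      simp only [Pi.add_apply]
      linear_combination has i + hbs i
    · rintro c a _ ⟨ha0, has⟩
      refine ⟨by simp [ha0], fun i => ?_⟩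
      simp only [Pi.smul_apply, smul_eq_mul]
      linear_combination c * has i
  · rintro ⟨h0, hs⟩
    rw [sum_single F x]
    apply Submodule.sum_mem
    intro i _
    by_cases hi : i = 0
    · subst hi; rw [h0, single3_zero]; exact Submodule.zero_mem _
    · exact single3_mem_SGx F i hi (x i) (hs i)

def good (x : Fin 8 → Fin 3 → F) : Prop := ∀ i, x i 0 + x i 1 + x i 2 = 0

lemma single3_mem_SG (i : Fin 8) (r : Fin 3 → F) (hr : r ∈ Sset F) :
    single3 F i r ∈ SG F :=
  Submodule.subset_span ⟨i, r, hr, rfl⟩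

lemma mem_SG_iff (x : Fin 8 → Fin 3 → F) : x ∈ SG F ↔ good F x := by
  constructor
  · intro hx
    refine Submodule.span_induction ?_ ?_ ?_ ?_ hx
    · rintro z ⟨i, r, hr, rfl⟩ k
      rw [single3_apply]
      split_ifs
      · exact hr
      · simp
    · intro i; simp
    · rintro a b _ _ has hbs i
      simp only [Pi.add_apply]
      linear_combination has i + hbs i
    · rintro c a _ has i
      simp only [Pi.smul_apply, smul_eq_mul]
      linear_combination c * has i
  · intro hs
    rw [sum_single F x]
    exact Submodule.sum_mem _ (fun i _ => single3_mem_SG F i (x i) (hs i))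

def good0 (x : Fin 8 → Fin 3 → F) : Prop :=
  (∀ k, k ≠ 0 → x k = 0) ∧ x 0 0 + x 0 1 + x 0 2 = 0

lemma mem_SG0_iff (x : Fin 8 → Fin 3 → F) : x ∈ SG0 F ↔ good0 F x := by
  constructor
  · intro hx
    refine Submodule.span_induction ?_ ?_ ?_ ?_ hx
    · rintro z ⟨r, hr, rfl⟩
      constructor
      · intro k hk; rw [single3_apply, if_neg hk]
      · rw [single3_apply, if_pos rfl]; exact hr
    · exact ⟨fun k _ => rfl, by simp⟩
    · rintro a b _ _ ⟨ha0, has⟩ ⟨hb0, hbs⟩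
      refine ⟨fun k hk => by simp [ha0 k hk, hb0 k hk], ?_⟩
      simp only [Pi.add_apply]
      linear_combination has + hbs
    · rintro c a _ ⟨ha0, has⟩
      refine ⟨fun k hk => by simp [ha0 k hk], ?_⟩
      simp only [Pi.smul_apply, smul_eq_mul]
      linear_combination c * has
  · rintro ⟨h0, hs⟩
    have hx : x = single3 F 0 (x 0) := by
      funext k
      rw [single3_apply]
      split_ifs with h
      · rw [h]
      · exact h0 k h
    rw [hx]
    exact Submodule.subset_span ⟨x 0, hs, rfl⟩

end
end GGA
namespace GGA
noncomputable section
variable (F : Type*) [Field F]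

lemma disjoint_SG0_SGx : Disjoint (SG0 F) (SGx F) := by
  rw [Submodule.disjoint_def]
  intro x hx0 hxx
  obtain ⟨h0, _⟩ := (mem_SG0_iff F x).1 hx0
  obtain ⟨hz, _⟩ := (mem_SGx_iff F x).1 hxx
  funext k
  by_cases hk : k = 0
  · rw [hk, hz]; rfl
  · rw [h0 k hk]; rfl

lemma sup_eq_SG : SG0 F ⊔ SGx F = SG F := by
  apply le_antisymm
  · apply sup_le
    · intro x hx
      obtain ⟨h0, hs⟩ := (mem_SG0_iff F x).1 hx
      rw [mem_SG_iff]
      intro i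
      by_cases hi : i = 0
      · rw [hi]; exact hs
      · rw [h0 i hi]; simp
    · intro x hx
      obtain ⟨_, hs⟩ := (mem_SGx_iff F x).1 hx
      rw [mem_SG_iff]
      exact hs
  · intro x hx
    have hs := (mem_SG_iff F x).1 hx
    rw [Submodule.mem_sup]
    refine ⟨single3 F 0 (x 0), ?_, x - single3 F 0 (x 0), ?_, by simp⟩
    · rw [mem_SG0_iff]
      refine ⟨fun k hk => by rw [single3_apply, if_neg hk], ?_⟩
      rw [single3_apply, if_pos rfl]
      exact hs 0
    · rw [mem_SGx_iff]
      constructor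
      · simp [single3_apply]
      · intro i
        by_cases hi : i = 0
        · subst hi; simp [single3_apply]
        · simp only [Pi.sub_apply, single3_apply, if_neg hi]
          simpa using hs i

/-- finrank of SG0 -/
def phi0 : (Fin 8 → Fin 3 → F) →ₗ[F] (Fin 2 → F) where
  toFun x := fun j => x 0 ⟨j.1, by omega⟩
  map_add' x y := by funext j; simp
  map_smul' c x := by funext j; simp

lemma finrank_SG0 : Module.finrank F ↥(SG0 F) = 2 := by
  have e : ↥(SG0 F) ≃ₗ[F] (Fin 2 → F) := by
    apply LinearEquiv.ofBijective ((phi0 F).comp (SG0 F).subtype)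
    constructor
    · intro x y hxy
      obtain ⟨hx0, hxs⟩ := (mem_SG0_iff F x.1).1 x.2
      obtain ⟨hy0, hys⟩ := (mem_SG0_iff F y.1).1 y.2
      ext k m
      by_cases hk : k = (0 : Fin 8)
      · subst hk
        have h0 := congrFun hxy 0
        have h1 := congrFun hxy 1
        simp only [phi0, LinearMap.comp_apply, LinearMap.coe_mk, AddHom.coe_mk,
          Submodule.coe_subtype] at h0 h1
        have h0' : (x.1 0 0 : F) = y.1 0 0 := h0
        have h1' : (x.1 0 1 : F) = y.1 0 1 := h1
        fin_cases m
        · exact h0'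
        · exact h1'
        · have : x.1 0 2 = y.1 0 2 := by linear_combination hxs - hys - h0' - h1'
          exact this
      · rw [hx0 k hk, hy0 k hk]
    · intro v
      refine ⟨⟨single3 F 0 ![v 0, v 1, -v 0 - v 1], ?_⟩, ?_⟩
      · rw [mem_SG0_iff]
        refine ⟨fun k hk => by rw [single3_apply, if_neg hk], ?_⟩
        simp [single3_apply]
        try ring
      · funext j
        simp only [phi0, LinearMap.comp_apply, LinearMap.coe_mk, AddHom.coe_mk,
          Submodule.coe_subtype, single3_apply, if_pos rfl]
        fin_cases j <;> simp
  rw [e.finrank_eq]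
  simp [Module.finrank_pi]

/-- finrank of SGx -/
def phix : (Fin 8 → Fin 3 → F) →ₗ[F] (Fin 7 → Fin 2 → F) where
  toFun x := fun i j => x ⟨i.1 + 1, by omega⟩ ⟨j.1, by omega⟩
  map_add' x y := by funext i j; simp
  map_smul' c x := by funext i j; simp

lemma finrank_SGx : Module.finrank F ↥(SGx F) = 14 := by
  have e : ↥(SGx F) ≃ₗ[F] (Fin 7 → Fin 2 → F) := by
    apply LinearEquiv.ofBijective ((phix F).comp (SGx F).subtype)
    constructor
    · intro x y hxy
      obtain ⟨hx0, hxs⟩ := (mem_SGx_iff F x.1).1 x.2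
      obtain ⟨hy0, hys⟩ := (mem_SGx_iff F y.1).1 y.2
      ext k m
      by_cases hk : k = (0 : Fin 8)
      · subst hk; rw [hx0, hy0]
      · have hk7 : k.1 - 1 < 7 := by omega
        have hkk : (⟨(k.1 - 1) + 1, by omega⟩ : Fin 8) = k := by
          ext
          simp only []
          have : k.1 ≠ 0 := fun h => hk (Fin.ext h)
          omega
        have h0 := congrFun (congrFun hxy ⟨k.1 - 1, hk7⟩) 0
        have h1 := congrFun (congrFun hxy ⟨k.1 - 1, hk7⟩) 1
        simp only [phix, LinearMap.comp_apply, LinearMap.coe_mk, AddHom.coe_mk,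
          Submodule.coe_subtype, hkk] at h0 h1
        have h0' : (x.1 k 0 : F) = y.1 k 0 := h0
        have h1' : (x.1 k 1 : F) = y.1 k 1 := h1
        fin_cases m
        · exact h0'
        · exact h1'
        · have : x.1 k 2 = y.1 k 2 := by linear_combination hxs k - hys k - h0' - h1'
          exact this
    · intro v
      classical
      refine ⟨⟨fun k => if hk : k = 0 then 0 else
          ![v ⟨k.1 - 1, by omega⟩ 0, v ⟨k.1 - 1, by omega⟩ 1,
            -v ⟨k.1 - 1, by omega⟩ 0 - v ⟨k.1 - 1, by omega⟩ 1], ?_⟩, ?_⟩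
      · rw [mem_SGx_iff]
        constructor
        · simp
        · intro i
          by_cases hi : i = 0
          · simp [hi]
          · simp only [dif_neg hi]
            simp
            try ring
      · funext i j
        have hne : (⟨i.1 + 1, by omega⟩ : Fin 8) ≠ 0 := by
          intro h
          have := congrArg Fin.val h
          simp at this
        simp only [phix, LinearMap.comp_apply, LinearMap.coe_mk, AddHom.coe_mk,
          Submodule.coe_subtype, dif_neg hne]
        have : ((⟨i.1 + 1, by omega⟩ : Fin 8).1 - 1) = i.1 := by simp
        fin_cases j <;> simp [this]
  rw [e.finrank_eq]
  rw [Module.finrank_pi_fintype]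
  simp [Module.finrank_pi]

end
end GGA
namespace GGA
noncomputable section
variable (F : Type*) [Field F]

lemma ve_mem : ve F ∈ Sset F := by
  rw [mem_Sset_iff]; simp [ve]

lemma vf_mem : vf F ∈ Sset F := by
  rw [mem_Sset_iff]; simp [vf]

/-- the successor map in I with wraparound -/
def nxt : Fin 8 → Fin 8 := ![0, 2, 3, 4, 5, 6, 7, 1]

lemma nxt_facts : ∀ k : Fin 8, k ≠ 0 →
    nxt k ≠ 0 ∧ nxt k ≠ k ∧ k ≠ nxt k ∧ ((nxt k : ℕ) + 7 - (k : ℕ)) % 7 = 1 ∧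
    star (star k (nxt k)) (nxt k) = k := by
  rw [star_eq]; decide

lemma center_subset_SG0 (x : Fin 8 → Fin 3 → F)
    (hxSG : x ∈ SG F) (hc : ∀ y ∈ SG F, bracket3 F x y = 0) : x ∈ SG0 F := by
  have hg := (mem_SG_iff F x).1 hxSG
  rw [mem_SG0_iff]
  refine ⟨?_, hg 0⟩
  intro k hk
  obtain ⟨hj0, hjk, hkj, hd, hss⟩ := nxt_facts k hk
  have hb := hc (single3 F (nxt k) (ve F)) (single3_mem_SG F _ _ (ve_mem F))
  have h := congrFun hb (star k (nxt k))
  rw [bracket_single_right] at h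
  rw [hss] at h
  rw [sig_br F k (nxt k) hk hj0 hkj] at h
  rw [if_pos hd] at h
  simp only [Pi.zero_apply] at h
  have h0 := congrFun h 0
  have h1 := congrFun h 1
  have h2 := congrFun h 2
  simp only [w1, ve, Pi.zero_apply] at h0 h1 h2
  simp only [Matrix.cons_val_zero, Matrix.cons_val_one, Matrix.head_cons,
    Matrix.cons_val_two, Matrix.tail_cons] at h0 h1 h2
  funext m
  fin_cases m
  · show x k 0 = 0; linear_combination -h2
  · show x k 1 = 0; linear_combination -h0
  · show x k 2 = 0; linear_combination -h1

lemma SG0_central (x : Fin 8 → Fin 3 → F) (hx : x ∈ SG0 F) (y : Fin 8 → Fin 3 → F) :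
    bracket3 F x y = 0 := by
  obtain ⟨h0, _⟩ := (mem_SG0_iff F x).1 hx
  funext c
  unfold bracket3
  apply Finset.sum_eq_zero
  intro i _
  apply Finset.sum_eq_zero
  intro j _
  by_cases hi : i = 0
  · subst hi; rw [sig_left0]; simp
  · rw [h0 i hi, sig_zero_left]; simp

lemma center_eq (h2 : (2:F) ≠ 0) :
    {x : Fin 8 → Fin 3 → F | x ∈ SG F ∧ ∀ y ∈ SG F, bracket3 F x y = 0} = ↑(SG0 F) := by
  ext x
  simp only [Set.mem_setOf_eq, SetLike.mem_coe]
  constructor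
  · rintro ⟨hxSG, hc⟩
    exact center_subset_SG0 F x hxSG hc
  · intro hx0
    constructor
    · obtain ⟨h0, hs⟩ := (mem_SG0_iff F x).1 hx0
      rw [mem_SG_iff]
      intro i
      by_cases hi : i = 0
      · rw [hi]; exact hs
      · rw [h0 i hi]; simp
    · intro y _
      exact SG0_central F x hx0 y

/-- bracket closure on goodx -/
lemma bracket_goodx (x y : Fin 8 → Fin 3 → F) (hx : goodx F x) (hy : goodx F y) :
    goodx F (bracket3 F x y) := by
  constructor
  · show bracket3 F x y 0 = 0
    unfold bracket3
    apply Finset.sum_eq_zero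
    intro i _
    apply Finset.sum_eq_zero
    intro j _
    by_cases hij : i = j
    · subst hij; rw [sig_diag]; simp
    · rw [if_neg (fun h => hij ((star_eq_zero i j).1 h))]
  · intro k
    unfold bracket3
    simp only [Finset.sum_apply]
    rw [← Finset.sum_add_distrib, ← Finset.sum_add_distrib]
    apply Finset.sum_eq_zero
    intro i _
    rw [← Finset.sum_add_distrib, ← Finset.sum_add_distrib]
    apply Finset.sum_eq_zero
    intro j _
    by_cases h : star i j = k
    · simp only [if_pos h]
      exact sig_mem F i j (x i) (y j) (hx.2 i) (hy.2 j)
    · simp only [if_neg h, Pi.zero_apply, add_zero]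

lemma bracket_mem_SGx (x : Fin 8 → Fin 3 → F) (hx : x ∈ SGx F)
    (y : Fin 8 → Fin 3 → F) (hy : y ∈ SGx F) : bracket3 F x y ∈ SGx F := by
  rw [mem_SGx_iff] at *
  exact bracket_goodx F x y hx hy

lemma nontrivial_bracket :
    bracket3 F (single3 F 1 (ve F)) (single3 F 2 (ve F)) ≠ 0 := by
  rw [bracket_single]
  intro h
  have h4 := congrFun (congrFun h (star 1 2)) 0
  rw [single3_apply, if_pos rfl] at h4
  rw [sig_br F 1 2 (by decide) (by decide) (by decide)] at h4
  rw [if_pos (by norm_num)] at h4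
  simp only [w1, ve, Pi.zero_apply, Matrix.cons_val_zero, Matrix.cons_val_one,
    Matrix.head_cons, Matrix.cons_val_two, Matrix.tail_cons] at h4
  norm_num at h4

end
end GGA
namespace GGA
noncomputable section
variable (F : Type*) [Field F]

def offt : ℕ → ℕ
  | 1 => 3 | 2 => 6 | 3 => 1 | 4 => 5 | 5 => 4 | 6 => 2 | _ => 0

lemma dmod_facts : ∀ k c : Fin 8, k ≠ 0 → c ≠ 0 → k ≠ c →
    star k c ≠ 0 ∧ star k c ≠ k ∧ k ≠ star k c ∧
    ((star k c : ℕ) + 7 - (k : ℕ)) % 7 = offt (((c : ℕ) + 7 - (k : ℕ)) % 7) := by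
  rw [star_eq]; decide

/-- The key quadratic identity for the operator `(ad e g_k)²`. -/
lemma Nval (k c : Fin 8) (hk : k ≠ 0) (hc : c ≠ 0) (hkc : k ≠ c) (u : Fin 3 → F) :
    sigma3 F k (star k c) (ve F) (sigma3 F k c (ve F)
      (sigma3 F k (star k c) (ve F) (sigma3 F k c (ve F) u)))
    + (4:F) • sigma3 F k (star k c) (ve F) (sigma3 F k c (ve F) u)
    = if ((c:ℕ)+7-(k:ℕ))%7 = 4 ∨ ((c:ℕ)+7-(k:ℕ))%7 = 5 then 0 else (-3:F) • u := by
  obtain ⟨hm0, hmk, hkm, hoff⟩ := dmod_facts k c hk hc hkc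
  have hkc' : (k:ℕ) ≠ (c:ℕ) := fun h => hkc (Fin.ext h)
  have hk8 : (k:ℕ) < 8 := k.isLt
  have hc8 : (c:ℕ) < 8 := c.isLt
  have hk0 : (k:ℕ) ≠ 0 := fun h => hk (Fin.ext h)
  have hc0 : (c:ℕ) ≠ 0 := fun h => hc (Fin.ext h)
  have hd : ((c:ℕ)+7-(k:ℕ))%7 = 1 ∨ ((c:ℕ)+7-(k:ℕ))%7 = 2 ∨ ((c:ℕ)+7-(k:ℕ))%7 = 3 ∨
      ((c:ℕ)+7-(k:ℕ))%7 = 4 ∨ ((c:ℕ)+7-(k:ℕ))%7 = 5 ∨ ((c:ℕ)+7-(k:ℕ))%7 = 6 := by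
    omega
  rcases hd with hd | hd | hd | hd | hd | hd <;>
      rw [hd] at hoff <;>
      [ (have hoff' : ((star k c : ℕ) + 7 - (k : ℕ)) % 7 = 3 := by rw [hoff]; rfl);
        (have hoff' : ((star k c : ℕ) + 7 - (k : ℕ)) % 7 = 6 := by rw [hoff]; rfl);
        (have hoff' : ((star k c : ℕ) + 7 - (k : ℕ)) % 7 = 1 := by rw [hoff]; rfl);
        (have hoff' : ((star k c : ℕ) + 7 - (k : ℕ)) % 7 = 5 := by rw [hoff]; rfl);
        (have hoff' : ((star k c : ℕ) + 7 - (k : ℕ)) % 7 = 4 := by rw [hoff]; rfl);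
        (have hoff' : ((star k c : ℕ) + 7 - (k : ℕ)) % 7 = 2 := by rw [hoff]; rfl)] <;>
    simp only [sig_br F k c hk hc hkc, sig_br F k (star k c) hk hm0 hmk.symm, hd, hoff'] <;>
    norm_num <;>
    funext m <;> fin_cases m <;>
    simp [w1, w2, w4, ve, Pi.smul_apply, smul_eq_mul] <;> ring

end
end GGA
namespace GGA
noncomputable section
variable (F : Type*) [Field F]

def Pop (k : Fin 8) (z : Fin 8 → Fin 3 → F) : Fin 8 → Fin 3 → F :=
  bracket3 F (single3 F k (ve F)) z

def Qop (k : Fin 8) (z : Fin 8 → Fin 3 → F) : Fin 8 → Fin 3 → F :=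
  Pop F k (Pop F k (Pop F k (Pop F k z))) + (4:F) • Pop F k (Pop F k z)

lemma Pop_apply (k : Fin 8) (z : Fin 8 → Fin 3 → F) (c : Fin 8) :
    Pop F k z c = sigma3 F k (star k c) (ve F) (z (star k c)) :=
  bracket_single_left F k (ve F) z c

lemma PP_apply (k : Fin 8) (z : Fin 8 → Fin 3 → F) (c : Fin 8) :
    Pop F k (Pop F k z) c = sigma3 F k (star k c) (ve F) (sigma3 F k c (ve F) (z c)) := by
  rw [Pop_apply, Pop_apply, star_star]

/-- survival predicate of component `c` under `Qop k` -/
def surv (k c : Fin 8) : Prop :=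
  c ≠ 0 ∧ c ≠ k ∧ ¬(((c:ℕ)+7-(k:ℕ))%7 = 4 ∨ ((c:ℕ)+7-(k:ℕ))%7 = 5)

instance (k c : Fin 8) : Decidable (surv k c) := by unfold surv; infer_instance

lemma Qop_val (k : Fin 8) (hk : k ≠ 0) (z : Fin 8 → Fin 3 → F) (c : Fin 8) :
    Qop F k z c = if surv k c then (-3:F) • z c else 0 := by
  by_cases hc0 : c = 0
  · subst hc0
    rw [if_neg (fun h => h.1 rfl)]
    have hP0 : ∀ w : Fin 8 → Fin 3 → F, Pop F k w 0 = 0 := by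
      intro w; rw [Pop_apply, star_zero, sig_diag]
    show Pop F k (Pop F k (Pop F k (Pop F k z))) 0 + ((4:F) • Pop F k (Pop F k z)) 0 = 0
    rw [hP0, Pi.smul_apply, hP0]
    simp
  · by_cases hck : c = k
    · rw [if_neg (fun h => h.2.1 hck)]
      have hPk : ∀ w : Fin 8 → Fin 3 → F, Pop F k w c = 0 := by
        intro w; rw [Pop_apply, hck, star_self, sig_right0]
      show Pop F k (Pop F k (Pop F k (Pop F k z))) c + ((4:F) • Pop F k (Pop F k z)) c = 0
      rw [hPk, Pi.smul_apply, hPk]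
      simp
    · have hkc : k ≠ c := fun h => hck h.symm
      show Pop F k (Pop F k (Pop F k (Pop F k z))) c + ((4:F) • Pop F k (Pop F k z)) c
        = _
      rw [Pi.smul_apply, PP_apply, PP_apply]
      have := Nval F k c hk hc0 hkc (z c)
      rw [this]
      unfold surv
      by_cases hd : ((c:ℕ)+7-(k:ℕ))%7 = 4 ∨ ((c:ℕ)+7-(k:ℕ))%7 = 5
      · rw [if_pos hd]; exact (if_neg (show ¬ surv k c from fun h => h.2.2 hd)).symm
      · rw [if_neg hd]; exact (if_pos (show surv k c from ⟨hc0, hck, hd⟩)).symm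

lemma Qop_good (k : Fin 8) (hk : k ≠ 0) (z : Fin 8 → Fin 3 → F) (hz : goodx F z) :
    goodx F (Qop F k z) := by
  constructor
  · rw [Qop_val F k hk z 0, if_neg (fun h => h.1 rfl)]
  · intro c
    rw [Qop_val F k hk z c]
    split_ifs
    · simp only [Pi.smul_apply, smul_eq_mul]
      linear_combination (-3:F) * hz.2 c
    · simp

def kA : Fin 8 → Fin 8 := ![0,7,1,2,3,4,5,6]
def kB : Fin 8 → Fin 8 := ![0,6,7,1,2,3,4,5]
def kC : Fin 8 → Fin 8 := ![0,5,6,7,1,2,3,4]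

lemma k_ne_zero : ∀ i : Fin 8, i ≠ 0 → kA i ≠ 0 ∧ kB i ≠ 0 ∧ kC i ≠ 0 := by decide

lemma triple_surv1 : ∀ i c : Fin 8, i ≠ 0 →
    surv (kA i) c → surv (kB i) c → surv (kC i) c → c = i := by decide

lemma triple_surv2 : ∀ i : Fin 8, i ≠ 0 →
    surv (kA i) i ∧ surv (kB i) i ∧ surv (kC i) i := by decide

lemma tripleQ (i : Fin 8) (hi : i ≠ 0) (z : Fin 8 → Fin 3 → F) :
    Qop F (kC i) (Qop F (kB i) (Qop F (kA i) z)) = single3 F i ((-27:F) • z i) := by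
  obtain ⟨hA, hB, hC⟩ := k_ne_zero i hi
  funext c
  rw [Qop_val F (kC i) hC _ c, Qop_val F (kB i) hB _ c, Qop_val F (kA i) hA _ c,
    single3_apply]
  by_cases hc : c = i
  · subst hc
    obtain ⟨s1, s2, s3⟩ := triple_surv2 c hi
    rw [if_pos s1, if_pos s2, if_pos s3, if_pos rfl, smul_smul, smul_smul]
    norm_num
  · rw [if_neg hc]
    by_cases h1 : surv (kA i) c
    · by_cases h2 : surv (kB i) c
      · rw [if_neg (fun h3 => hc (triple_surv1 i c hi h1 h2 h3))]
      · rw [if_neg h2]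
        split_ifs <;> simp
    · rw [if_neg h1]
      split_ifs <;> simp

end
end GGA
namespace GGA
noncomputable section
variable (F : Type*) [Field F]

def FullAt (J : Submodule F (Fin 8 → Fin 3 → F)) (t : Fin 8) : Prop :=
  ∀ v : Fin 3 → F, v 0 + v 1 + v 2 = 0 → single3 F t v ∈ J

lemma prop_facts : ∀ t t' : Fin 8, t ≠ 0 → t' ≠ 0 → t ≠ t' →
    star t t' ≠ 0 ∧ star t t' ≠ t ∧ star (star t t') t = t' ∧
    1 ≤ ((t:ℕ)+7-((star t t'):ℕ))%7 ∧ ((t:ℕ)+7-((star t t'):ℕ))%7 ≤ 6 := by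
  rw [star_eq]; decide

lemma FullAt_step (J : Submodule F (Fin 8 → Fin 3 → F))
    (hinv : ∀ x ∈ SGx F, ∀ y ∈ J, bracket3 F x y ∈ J)
    (t t' : Fin 8) (ht : t ≠ 0) (ht' : t' ≠ 0) (hF : FullAt F J t) : FullAt F J t' := by
  by_cases htt : t = t'
  · subst htt; exact hF
  obtain ⟨hj0, hjt, hstar, hd1, hd6⟩ := prop_facts t t' ht ht' htt
  set j := star t t' with hj
  have hjt' : j ≠ t := hjt
  intro v hv
  have key : ∀ u s : Fin 3 → F, u ∈ Sset F → s 0 + s 1 + s 2 = 0 →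
      sigma3 F j t u s = v → single3 F t' v ∈ J := by
    intro u s hu hs hsig
    have hx : single3 F j u ∈ SGx F := single3_mem_SGx F j hj0 u hu
    have hb := hinv _ hx _ (hF s hs)
    rw [bracket_single, hstar, hsig] at hb
    exact hb
  have hne : ((t:ℕ)+7-(j:ℕ))%7 = 1 ∨ ((t:ℕ)+7-(j:ℕ))%7 = 2 ∨ ((t:ℕ)+7-(j:ℕ))%7 = 3 ∨
      ((t:ℕ)+7-(j:ℕ))%7 = 4 ∨ ((t:ℕ)+7-(j:ℕ))%7 = 5 ∨ ((t:ℕ)+7-(j:ℕ))%7 = 6 := by omega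
  have hbr := sig_br F j t hj0 ht (fun h => hjt' h)
  rcases hne with hd | hd | hd | hd | hd | hd
  · apply key (ve F) ![v 0, v 2, v 1] (ve_mem F) (by simp; ring_nf; linear_combination hv)
    rw [hbr, if_pos hd]
    funext m; fin_cases m <;> simp [w1, ve] <;> ring
  · apply key (vf F) ![v 2, v 1, v 0] (vf_mem F) (by simp; ring_nf; linear_combination hv)
    rw [hbr]
    rw [if_neg (by omega), if_pos hd]
    funext m; fin_cases m <;> simp [w2, vf] <;> ring
  · apply key (ve F) ![-v 0, -v 2, -v 1] (ve_mem F) (by simp; ring_nf; linear_combination -hv)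
    rw [hbr]
    rw [if_neg (by omega), if_neg (by omega), if_pos hd]
    funext m; fin_cases m <;> simp [w4, ve] <;> ring
  · apply key (vf F) ![-v 1, -v 2, -v 0] (vf_mem F) (by simp; ring_nf; linear_combination -hv)
    rw [hbr]
    rw [if_neg (by omega), if_neg (by omega), if_neg (by omega), if_pos hd]
    funext m; fin_cases m <;> simp [w4, vf] <;> ring
  · apply key (vf F) ![v 2, v 0, v 1] (vf_mem F) (by simp; ring_nf; linear_combination hv)
    rw [hbr]
    rw [if_neg (by omega), if_neg (by omega), if_neg (by omega), if_neg (by omega),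
      if_pos hd]
    funext m; fin_cases m <;> simp [w2, vf] <;> ring
  · apply key (ve F) ![v 2, v 0, v 1] (ve_mem F) (by simp; ring_nf; linear_combination hv)
    rw [hbr]
    rw [if_neg (by omega), if_neg (by omega), if_neg (by omega), if_neg (by omega),
      if_neg (by omega)]
    funext m; fin_cases m <;> simp [w1, ve] <;> ring

lemma left_facts1 : ∀ i : Fin 8, i ≠ 0 →
    ∃ j : Fin 8, j ≠ 0 ∧ j ≠ i ∧ ((i:ℕ)+7-(j:ℕ))%7 = 1 ∧ star j i ≠ 0 := by
  rw [star_eq]; decide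

lemma left_facts4 : ∀ i : Fin 8, i ≠ 0 →
    ∃ j : Fin 8, j ≠ 0 ∧ j ≠ i ∧ ((i:ℕ)+7-(j:ℕ))%7 = 4 ∧ star j i ≠ 0 := by
  rw [star_eq]; decide

lemma full_from_single (J : Submodule F (Fin 8 → Fin 3 → F))
    (hinv : ∀ x ∈ SGx F, ∀ y ∈ J, bracket3 F x y ∈ J)
    (h2 : (2:F) ≠ 0) (h3 : (3:F) ≠ 0)
    (i : Fin 8) (hi : i ≠ 0) (r : Fin 3 → F) (hr : r 0 + r 1 + r 2 = 0)
    (hrne : r ≠ 0) (hmem : single3 F i r ∈ J) :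
    ∃ t : Fin 8, t ≠ 0 ∧ FullAt F J t := by
  have hkey : ∀ (j : Fin 8), j ≠ 0 → (lam : F) → lam ≠ 0 →
      (∀ v : Fin 3 → F, v 0 + v 1 + v 2 = 0 →
        ∃ s : Fin 3 → F, s 0 + s 1 + s 2 = 0 ∧ sigma3 F j i s r = lam • v) →
      FullAt F J (star j i) := by
    intro j hj0 lam hlam hsol v hv
    obtain ⟨s, hs, hsig⟩ := hsol v hv
    have hx : single3 F j s ∈ SGx F := single3_mem_SGx F j hj0 s hs
    have hb := hinv _ hx _ hmem
    rw [bracket_single, hsig] at hb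
    have : single3 F (star j i) (lam • v) = lam • single3 F (star j i) v := by
      funext k
      rw [single3_apply, Pi.smul_apply, single3_apply]
      split_ifs <;> simp
    rw [this] at hb
    have := Submodule.smul_mem J lam⁻¹ hb
    rwa [smul_smul, inv_mul_cancel₀ hlam, one_smul] at this
  by_cases hcase : r 1 ≠ 0 ∧ 2 * r 0 + r 1 ≠ 0
  · obtain ⟨j, hj0, hji, hd, ht0⟩ := left_facts1 i hi
    refine ⟨star j i, ht0, ?_⟩
    apply hkey j hj0 (r 1 * (2 * r 0 + r 1)) (mul_ne_zero hcase.1 hcase.2)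
    intro v hv
    refine ⟨![v 2 * (2 * r 0 + r 1), v 1 * r 1 - r 0 * v 2,
      -(v 2 * (2 * r 0 + r 1)) - (v 1 * r 1 - r 0 * v 2)], by simp; try ring, ?_⟩
    rw [sig_br F j i hj0 hi hji, if_pos hd]
    funext m; fin_cases m
    · simp [w1]
      linear_combination (r 0 * v 2 + r 1 * v 2 + r 1 * v 1) * hr +
        (-2 * r 0 * r 1 - r 1 * r 1) * hv
    · simp [w1]
      linear_combination (-(r 1 * v 1) + r 0 * v 2) * hr
    · simp [w1]
      try ring
  · push_neg at hcase
    have hane : r 0 ≠ 0 ∧ r 0 + 2 * r 1 ≠ 0 := by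
      by_cases hb1 : r 1 = 0
      · have ha : r 0 ≠ 0 := by
          intro ha0
          apply hrne
          funext m; fin_cases m
          · exact ha0
          · exact hb1
          · show r 2 = 0; linear_combination hr - ha0 - hb1
        exact ⟨ha, by rw [hb1]; simpa using ha⟩
      · have h2ab := hcase hb1
        have ha : r 0 ≠ 0 := by
          intro h
          apply hb1
          linear_combination h2ab - 2 * h
        constructor
        · exact ha
        · intro h
          -- r1 = -2 r0 from h2ab=0: 2a + b = 0 → b = -2a; a + 2b = a - 4a = -3a
          have : (3:F) * r 0 = 0 := by linear_combination 2 * h2ab - h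
          exact ha (by
            have := mul_eq_zero.1 this
            rcases this with h' | h'
            · exact absurd h' h3
            · exact h')
    obtain ⟨j, hj0, hji, hd, ht0⟩ := left_facts4 i hi
    refine ⟨star j i, ht0, ?_⟩
    apply hkey j hj0 (r 0 * (r 0 + 2 * r 1)) (mul_ne_zero hane.1 hane.2)
    intro v hv
    refine ⟨![-(v 0 * r 0 + v 1 * (r 0 + r 1)),
      (v 0 * r 0 + v 1 * (r 0 + r 1)) - v 1 * (r 0 + 2 * r 1),
      v 1 * (r 0 + 2 * r 1)], by simp; try ring, ?_⟩
    rw [sig_br F j i hj0 hi hji]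
    rw [if_neg (by omega), if_neg (by omega), if_neg (by omega), if_pos hd]
    funext m; fin_cases m
    · simp [w4]
      linear_combination (-(r 0 * v 0) + r 1 * v 1) * hr
    · simp [w4]
      try ring
    · simp [w4]
      linear_combination (r 0 * v 0 + r 0 * v 1 + r 1 * v 1) * hr +
        (-(r 0 * r 0) - 2 * r 0 * r 1) * hv

end
end GGA
namespace GGA
noncomputable section
variable (F : Type*) [Field F]

lemma SGx_simple (h2 : (2:F) ≠ 0) (h3 : (3:F) ≠ 0)
    (J : Submodule F (Fin 8 → Fin 3 → F)) (hle : J ≤ SGx F)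
    (hinv : ∀ x ∈ SGx F, ∀ y ∈ J, bracket3 F x y ∈ J) : J = ⊥ ∨ J = SGx F := by
  by_cases hbot : J = ⊥
  · left; exact hbot
  right
  obtain ⟨z, hzJ, hzne⟩ := Submodule.exists_mem_ne_zero_of_ne_bot hbot
  have hzgood := (mem_SGx_iff F z).1 (hle hzJ)
  have hzi : ∃ i : Fin 8, z i ≠ 0 := by
    by_contra h
    push_neg at h
    exact hzne (funext h)
  obtain ⟨i, hzine⟩ := hzi
  have hi : i ≠ 0 := by
    intro h
    rw [h, hzgood.1] at hzine
    exact hzine rfl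
  have hQmem : ∀ k : Fin 8, k ≠ 0 → ∀ w ∈ J, Qop F k w ∈ J := by
    intro k hk w hw
    have hsingle : single3 F k (ve F) ∈ SGx F := single3_mem_SGx F k hk _ (ve_mem F)
    unfold Qop Pop
    exact Submodule.add_mem _
      (hinv _ hsingle _ (hinv _ hsingle _ (hinv _ hsingle _ (hinv _ hsingle _ hw))))
      (Submodule.smul_mem _ _ (hinv _ hsingle _ (hinv _ hsingle _ hw)))
  obtain ⟨hA0, hB0, hC0⟩ := k_ne_zero i hi
  have hTmem : single3 F i ((-27:F) • z i) ∈ J := by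
    rw [← tripleQ F i hi z]
    exact hQmem _ hC0 _ (hQmem _ hB0 _ (hQmem _ hA0 _ hzJ))
  have h27 : (-27:F) ≠ 0 := by
    have h27' : (27:F) = 3 * 3 * 3 := by norm_num
    intro h
    have : (27:F) = 0 := by linear_combination -h
    rw [h27'] at this
    rcases mul_eq_zero.1 this with h' | h'
    · rcases mul_eq_zero.1 h' with h'' | h'' <;> exact h3 h''
    · exact h3 h'
  have hr'ne : (-27:F) • z i ≠ 0 := smul_ne_zero h27 hzine
  have hr'sum : ((-27:F) • z i) 0 + ((-27:F) • z i) 1 + ((-27:F) • z i) 2 = 0 := by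
    simp only [Pi.smul_apply, smul_eq_mul]
    linear_combination (-27:F) * hzgood.2 i
  obtain ⟨t, ht0, hfull⟩ :=
    full_from_single F J hinv h2 h3 i hi ((-27:F) • z i) hr'sum hr'ne hTmem
  apply le_antisymm hle
  rw [SGx]
  apply Submodule.span_le.2
  rintro w ⟨i', hi', r'', hr'', rfl⟩
  exact (FullAt_step F J hinv t i' ht0 hi' hfull) r'' hr''

/-- (char F ≠ 2,3.) `S^σ[G]` decomposes as the direct sum of `Sg₀`
(its center, of dimension 2) and `S^σ[G^×]`, a simple Lie subalgebra of dimension 14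
(of type `G₂`). -/
theorem g2_decomposition (h2 : (2 : F) ≠ 0) (h3 : (3 : F) ≠ 0) :
    Disjoint (SG0 F) (SGx F) ∧ SG0 F ⊔ SGx F = SG F ∧
    {x : Fin 8 → Fin 3 → F | x ∈ SG F ∧ ∀ y ∈ SG F, bracket3 F x y = 0} = ↑(SG0 F) ∧
    Module.finrank F ↥(SG0 F) = 2 ∧
    Module.finrank F ↥(SGx F) = 14 ∧
    (∀ x ∈ SGx F, ∀ y ∈ SGx F, bracket3 F x y ∈ SGx F) ∧
    (∃ x ∈ SGx F, ∃ y ∈ SGx F, bracket3 F x y ≠ 0) ∧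
    (∀ J : Submodule F (Fin 8 → Fin 3 → F), J ≤ SGx F →
      (∀ x ∈ SGx F, ∀ y ∈ J, bracket3 F x y ∈ J) → J = ⊥ ∨ J = SGx F) := by
  refine ⟨disjoint_SG0_SGx F, sup_eq_SG F, center_eq F h2, finrank_SG0 F, finrank_SGx F,
    bracket_mem_SGx F, ?_, SGx_simple F h2 h3⟩
  exact ⟨single3 F 1 (ve F), single3_mem_SGx F 1 (by decide) _ (ve_mem F),
    single3 F 2 (ve F), single3_mem_SGx F 2 (by decide) _ (ve_mem F),
    nontrivial_bracket F⟩

end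
end GGA
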